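/- Let X be a measurable space, m ≥ 1, μ a probability measure on X × Fin m, and l_p ∈ Fin m with μ{p : p.2 = l_p} > 0. Let q, k, N be natural numbers with 1 ≤ q ≤ k ≤ N. Let E be a function assigning to each label pattern ℓ : Fin N → Fin m a map E(ℓ) : Fin q → Fin N such that whenever the set {i : ℓ i = l_p} has at least k elements, E(ℓ) is injective and ℓ(E(ℓ)(j)) = l_p for every j ∈ Fin q (a deterministic, pattern-dependent selection of q of the label-l_p positions). On Ω := Fin N → (X × Fin m) equip the product probability measure ℙ := μ^{⊗N}, let labels(ω)(i) := (ω i).2, and let A := {ω : the set {i : (ω i).2 = l_p} has at least k elements}. Define S : Ω → (Fin q → X × Fin m) by S(ω)(j) := ω(E(labels(ω))(j)). Then the pushforward of the conditional measure ℙ[·|A] under S equals the q-fold product measure (μ[·|{p : p.2 = l_p}])^{⊗q}. -/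

import Mathlib

open MeasureTheory ProbabilityTheory

/-- Exchangeability / i.i.d.-subsample lemma for pattern-dependent selections: for `N`
i.i.d. samples from a probability measure `μ` on `X × Fin m`, let `E` assign to each
label pattern `ℓ : Fin N → Fin m` an injective selection of `q` positions with label
`l_p` (whenever at least `k ≥ q` such positions exist). Then, conditionally on there
being at least `k` samples with label `l_p`, the selected `q` samples are distributed as
`q` i.i.d. draws from `μ` conditioned on the label being `l_p`. -/
theorem subsample_pattern_selected_iid
    {X : Type*} [MeasurableSpace X] {m : ℕ} (hm : 1 ≤ m)
    (μ : Measure (X × Fin m)) [IsProbabilityMeasure μ] (l_p : Fin m)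
    (hpos : 0 < μ {p | p.2 = l_p})
    (q k N : ℕ) (hq : 1 ≤ q) (hqk : q ≤ k) (hkN : k ≤ N)
    (E : (Fin N → Fin m) → Fin q → Fin N)
    (hE : ∀ ℓ : Fin N → Fin m, k ≤ (Finset.univ.filter fun i => ℓ i = l_p).card →
      Function.Injective (E ℓ) ∧ ∀ j, ℓ (E ℓ j) = l_p)
    (S : (Fin N → X × Fin m) → Fin q → X × Fin m)
    (hS : Measurable S)
    (hSdef : ∀ ω : Fin N → X × Fin m, S ω = fun j => ω (E (fun i => (ω i).2) j))
    (A : Set (Fin N → X × Fin m))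
    (hA : A = {ω | k ≤ (Finset.univ.filter fun i => (ω i).2 = l_p).card}) :
    ((Measure.pi fun _ : Fin N => μ)[|A]).map S =
      Measure.pi fun _ : Fin q => μ[|{p | p.2 = l_p}] := by
  classical
  set L : Set (X × Fin m) := {p | p.2 = l_p} with hLdef
  have hLm : MeasurableSet L := measurable_snd (MeasurableSet.singleton l_p)
  set b : ENNReal := μ L with hbdef
  have hb0 : b ≠ 0 := hpos.ne'
  have hbtop : b ≠ ⊤ := measure_ne_top _ _
  set P : Measure (Fin N → X × Fin m) := Measure.pi fun _ : Fin N => μ with hPdef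
  haveI : IsProbabilityMeasure ((μ : Measure (X × Fin m))[|L]) :=
    cond_isProbabilityMeasure hb0
  -- the set of admissible label patterns
  set Lfin : Finset (Fin N → Fin m) :=
    Finset.univ.filter (fun ℓ => k ≤ (Finset.univ.filter fun i => ℓ i = l_p).card) with hLfin
  -- the label-pattern events
  set G : (Fin N → Fin m) → Set (Fin N → X × Fin m) :=
    fun ℓ => {ω | (fun i => (ω i).2) = ℓ} with hGdef
  have hGpi : ∀ ℓ, G ℓ = Set.pi Set.univ fun i => {p : X × Fin m | p.2 = ℓ i} := by
    intro ℓ; ext ω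
    simp [hGdef, Set.mem_pi, funext_iff]
  have hGm : ∀ ℓ, MeasurableSet (G ℓ) := by
    intro ℓ
    rw [hGpi]
    exact MeasurableSet.univ_pi fun i => measurable_snd (MeasurableSet.singleton _)
  have hGdisj : ∀ ℓ ℓ' : Fin N → Fin m, ℓ ≠ ℓ' → Disjoint (G ℓ) (G ℓ') := by
    intro ℓ ℓ' hne
    rw [Set.disjoint_left]
    intro ω h1 h2
    exact hne (h1.symm.trans h2)
  have hAm : MeasurableSet A := by
    have : A = ⋃ ℓ ∈ Lfin, G ℓ := by
      rw [hA]; ext ω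
      simp only [Set.mem_setOf_eq, Set.mem_iUnion, hLfin, Finset.mem_filter,
        Finset.mem_univ, true_and, hGdef]
      constructor
      · intro h; exact ⟨fun i => (ω i).2, h, rfl⟩
      · rintro ⟨ℓ, hℓ, rfl⟩; exact hℓ
    rw [this]
    exact MeasurableSet.biUnion (Finset.countable_toSet _) fun ℓ _ => hGm ℓ
  have hAun : A = ⋃ ℓ ∈ Lfin, G ℓ := by
    rw [hA]; ext ω
    simp only [Set.mem_setOf_eq, Set.mem_iUnion, hLfin, Finset.mem_filter,
      Finset.mem_univ, true_and, hGdef]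
    constructor
    · intro h; exact ⟨fun i => (ω i).2, h, rfl⟩
    · rintro ⟨ℓ, hℓ, rfl⟩; exact hℓ
  have hPG : ∀ ℓ, P (G ℓ) = ∏ i, μ {p : X × Fin m | p.2 = ℓ i} := by
    intro ℓ; rw [hGpi, hPdef, Measure.pi_pi]
  have hPA_sum : P A = ∑ ℓ ∈ Lfin, P (G ℓ) := by
    rw [hAun]
    exact measure_biUnion_finset
      (fun ℓ _ ℓ' _ hne => hGdisj ℓ ℓ' hne) (fun ℓ _ => hGm ℓ)
  -- P A is nonzero
  have hPA0 : P A ≠ 0 := by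
    have hsub : Set.pi Set.univ (fun _ : Fin N => L) ⊆ A := by
      rw [hA]
      intro ω hω
      simp only [Set.mem_pi, Set.mem_univ, true_implies, hLdef, Set.mem_setOf_eq] at hω
      have hfil : (Finset.univ.filter fun i => (ω i).2 = l_p) = Finset.univ :=
        Finset.filter_true_of_mem fun i _ => hω i
      simp only [Set.mem_setOf_eq, hfil, Finset.card_univ, Fintype.card_fin]
      exact hkN
    have hval : P (Set.pi Set.univ fun _ : Fin N => L) = b ^ N := by
      rw [hPdef, Measure.pi_pi, Finset.prod_const, Finset.card_univ, Fintype.card_fin]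
    intro h
    have : b ^ N = 0 := by
      refine le_antisymm ?_ zero_le
      rw [← h, ← hval]
      exact measure_mono hsub
    exact pow_ne_zero N hb0 this
  have hPAtop : P A ≠ ⊤ := measure_ne_top _ _
  -- the key computation
  have key : ∀ s : Fin q → Set (X × Fin m), (∀ j, MeasurableSet (s j)) →
      P (A ∩ S ⁻¹' Set.pi Set.univ s) * b ^ q = P A * ∏ j, μ (L ∩ s j) := by
    intro s hs
    set C : (Fin N → Fin m) → Fin N → Set (X × Fin m) :=
      fun ℓ i => {p : X × Fin m | p.2 = ℓ i} ∩ ⋂ (j : Fin q) (_ : E ℓ j = i), s j with hCdef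
    have hCm : ∀ ℓ i, MeasurableSet (C ℓ i) := fun ℓ i =>
      (measurable_snd (MeasurableSet.singleton _)).inter
        (MeasurableSet.iInter fun j => MeasurableSet.iInter fun _ => hs j)
    have hFeq : ∀ ℓ, G ℓ ∩ S ⁻¹' Set.pi Set.univ s = Set.pi Set.univ (C ℓ) := by
      intro ℓ; ext ω
      simp only [Set.mem_inter_iff, Set.mem_preimage, Set.mem_pi, Set.mem_univ,
        true_implies, hGdef, Set.mem_setOf_eq, hCdef, Set.mem_iInter, hSdef ω]
      constructor
      · rintro ⟨h1, h2⟩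
        rw [h1] at h2
        intro i
        refine ⟨congrFun h1 i, fun j hj => ?_⟩
        subst hj
        exact h2 j
      · intro h
        have h1 : (fun i => (ω i).2) = ℓ := funext fun i => (h i).1
        refine ⟨h1, fun j => ?_⟩
        rw [h1]
        exact (h (E ℓ j)).2 j rfl
    have hFm : ∀ ℓ, MeasurableSet (G ℓ ∩ S ⁻¹' Set.pi Set.univ s) :=
      fun ℓ => (hGm ℓ).inter (hS (MeasurableSet.univ_pi hs))
    have hsum1 : P (A ∩ S ⁻¹' Set.pi Set.univ s)
        = ∑ ℓ ∈ Lfin, P (G ℓ ∩ S ⁻¹' Set.pi Set.univ s) := by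
      rw [hAun, Set.iUnion₂_inter]
      exact measure_biUnion_finset
        (fun ℓ _ ℓ' _ hne =>
          (hGdisj ℓ ℓ' hne).mono Set.inter_subset_left Set.inter_subset_left)
        (fun ℓ _ => hFm ℓ)
    -- per-pattern identity
    have perℓ : ∀ ℓ ∈ Lfin,
        P (G ℓ ∩ S ⁻¹' Set.pi Set.univ s) * b ^ q = (∏ j, μ (L ∩ s j)) * P (G ℓ) := by
      intro ℓ hℓ
      have hℓ' : k ≤ (Finset.univ.filter fun i => ℓ i = l_p).card := by
        simpa [hLfin] using hℓ
      obtain ⟨hinj, hsel⟩ := hE ℓ hℓ'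
      set img : Finset (Fin N) := Finset.univ.image (E ℓ) with himg
      have hCsel : ∀ j, C ℓ (E ℓ j) = L ∩ s j := by
        intro j; ext p
        simp only [hCdef, Set.mem_inter_iff, Set.mem_setOf_eq, Set.mem_iInter,
          hLdef]
        constructor
        · rintro ⟨h1, h2⟩
          exact ⟨by rw [← hsel j]; exact h1, h2 j rfl⟩
        · rintro ⟨h1, h2⟩
          refine ⟨by rw [hsel j]; exact h1, fun j' hj' => ?_⟩
          cases hinj hj'
          exact h2
      have hCout : ∀ i : Fin N, i ∉ img → C ℓ i = {p : X × Fin m | p.2 = ℓ i} := by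
        intro i hi
        have hne : ∀ j, E ℓ j ≠ i := by
          intro j hj
          subst hj
          exact hi (Finset.mem_image_of_mem _ (Finset.mem_univ j))
        ext p
        simp only [hCdef, Set.mem_inter_iff, Set.mem_setOf_eq, Set.mem_iInter]
        constructor
        · rintro ⟨h1, _⟩; exact h1
        · intro h1; exact ⟨h1, fun j hj => absurd hj (hne j)⟩
      have hprod1 : ∏ i, μ (C ℓ i)
          = (∏ j, μ (L ∩ s j)) * ∏ i ∈ imgᶜ, μ {p : X × Fin m | p.2 = ℓ i} := by
        rw [← Finset.prod_mul_prod_compl img (fun i => μ (C ℓ i))]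
        congr 1
        · rw [himg, Finset.prod_image (fun j _ j' _ h => hinj h)]
          exact Finset.prod_congr rfl fun j _ => by rw [hCsel j]
        · exact Finset.prod_congr rfl fun i hi => by
            rw [hCout i (Finset.mem_compl.mp hi)]
      have hprod2 : ∏ i, μ {p : X × Fin m | p.2 = ℓ i}
          = b ^ q * ∏ i ∈ imgᶜ, μ {p : X × Fin m | p.2 = ℓ i} := by
        rw [← Finset.prod_mul_prod_compl img (fun i => μ {p : X × Fin m | p.2 = ℓ i})]
        congr 1
        rw [himg, Finset.prod_image (fun j _ j' _ h => hinj h)]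
        have : ∀ j : Fin q, μ {p : X × Fin m | p.2 = ℓ (E ℓ j)} = b := by
          intro j; rw [hsel j]
        rw [Finset.prod_congr rfl fun j _ => this j, Finset.prod_const,
          Finset.card_univ, Fintype.card_fin]
      rw [hFeq ℓ, hPG ℓ, hPdef, Measure.pi_pi, hprod1, hprod2]
      ring
    calc P (A ∩ S ⁻¹' Set.pi Set.univ s) * b ^ q
        = ∑ ℓ ∈ Lfin, P (G ℓ ∩ S ⁻¹' Set.pi Set.univ s) * b ^ q := by
          rw [hsum1, Finset.sum_mul]
      _ = ∑ ℓ ∈ Lfin, (∏ j, μ (L ∩ s j)) * P (G ℓ) :=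
          Finset.sum_congr rfl perℓ
      _ = (∏ j, μ (L ∩ s j)) * P A := by rw [← Finset.mul_sum, hPA_sum]
      _ = P A * ∏ j, μ (L ∩ s j) := mul_comm _ _
  -- conclude via uniqueness of product measures
  refine (Measure.pi_eq fun s hs => ?_).symm
  rw [Measure.map_apply hS (MeasurableSet.univ_pi hs),
    cond_apply hAm P (S ⁻¹' Set.pi Set.univ s)]
  have hνs : ∀ j, (μ[|L]) (s j) = b⁻¹ * μ (L ∩ s j) := fun j =>
    cond_apply hLm μ (s j)
  rw [Finset.prod_congr rfl fun j _ => hνs j, Finset.prod_mul_distrib,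
    Finset.prod_const, Finset.card_univ, Fintype.card_fin]
  have h1 : P (A ∩ S ⁻¹' Set.pi Set.univ s)
      = P A * (∏ j, μ (L ∩ s j)) * (b ^ q)⁻¹ := by
    rw [← key s hs, mul_assoc,
      ENNReal.mul_inv_cancel (pow_ne_zero q hb0) (ENNReal.pow_ne_top hbtop), mul_one]
  rw [h1]
  calc (P A)⁻¹ * (P A * (∏ j, μ (L ∩ s j)) * (b ^ q)⁻¹)
      = ((P A)⁻¹ * P A) * ((b ^ q)⁻¹ * ∏ j, μ (L ∩ s j)) := by ring
    _ = b⁻¹ ^ q * ∏ j, μ (L ∩ s j) := by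
        rw [ENNReal.inv_mul_cancel hPA0 hPAtop, one_mul, ENNReal.inv_pow]
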